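/- Let 𝒯 be a k-linear Hom-finite category with Serre functor S, T ∈ 𝒯, Γ = End_𝒯(T). For every T′ ∈ add(T) and X ∈ 𝒯, the map 𝒯(X, ST′) → Hom_Γ(𝒯(T,X), 𝒯(T,ST′)) induced by the functor 𝒯(T,−) is bijective. -/
import Mathlib


noncomputable section
open CategoryTheory CategoryTheory.Limits

/-- `Ext^i_R(A,B)` vanishes. -/
def ExtVanish (R : Type) [Ring R] (A B : ModuleCat R) (i : ℕ) : Prop :=
  Subsingleton (((Ext ℤ (ModuleCat R) i).obj (Opposite.op A)).obj B)

variable (k : Type) [Field k]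
variable (𝒯 : Type) [Category.{0} 𝒯] [Preadditive 𝒯]

/-- The category is Hom-finite over `k`. -/
def HomFinite [CategoryTheory.Linear k 𝒯] : Prop :=
  ∀ X Y : 𝒯, FiniteDimensional k (X ⟶ Y)

/-- The right `End T`-module structure (by precomposition) on `T ⟶ X`. -/
instance endOppositeModule (T X : 𝒯) : Module (End T)ᵐᵒᵖ (T ⟶ X) where
  smul m a := m.unop ≫ a
  one_smul a := Category.id_comp a
  mul_smul m n a := by
    show (n.unop * m.unop) ≫ a = m.unop ≫ n.unop ≫ a
    show (m.unop ≫ n.unop) ≫ a = _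
    simp
  smul_zero m := Limits.comp_zero
  smul_add m a b := Preadditive.comp_add _ _ _ _ _ _
  add_smul m n a := Preadditive.add_comp _ _ _ _ _ _
  zero_smul a := Limits.zero_comp

/-- The `Γ`-linear map `𝒯(T,X) → 𝒯(T,Y)` induced by postcomposition with `f : X ⟶ Y`. -/
def postcompHom (T : 𝒯) {X Y : 𝒯} (f : X ⟶ Y) :
    (T ⟶ X) →ₗ[(End T)ᵐᵒᵖ] (T ⟶ Y) where
  toFun a := a ≫ f
  map_add' a b := Preadditive.add_comp _ _ _ _ _ _
  map_smul' m a := by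
    show (m.unop ≫ a) ≫ f = m.unop ≫ (a ≫ f)
    simp

/-- The image of `X` under the functor `𝒯(T,-) : 𝒯 → Mod (End T)ᵐᵒᵖ`. -/
def homMod (T X : 𝒯) : ModuleCat (End T)ᵐᵒᵖ := ModuleCat.of _ (T ⟶ X)

/-- Membership in `add T`: direct summand of a finite direct sum of copies of `T`. -/
def InAdd [HasFiniteBiproducts 𝒯] (T X : 𝒯) : Prop :=
  ∃ (n : ℕ) (s : X ⟶ biproduct (fun _ : Fin n => T))
    (r : biproduct (fun _ : Fin n => T) ⟶ X), s ≫ r = 𝟙 X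

/-- `X` is indecomposable. -/
def Indecomposable' (X : 𝒯) : Prop :=
  ¬ Limits.IsZero X ∧ ∀ e : X ⟶ X, e ≫ e = e → e = 0 ∨ e = 𝟙 X

/-- The functor `𝒯(T,-)` is full onto `Γ`-linear maps. -/
def HomFunctorFull (T : 𝒯) : Prop :=
  ∀ (X Y : 𝒯) (φ : (T ⟶ X) →ₗ[(End T)ᵐᵒᵖ] (T ⟶ Y)), ∃ g : X ⟶ Y, ∀ a, φ a = a ≫ g

/-- The essential image of `𝒯(T,-)` in `mod (End T)ᵐᵒᵖ`. -/
def EssIm (T : 𝒯) : Set (ModuleCat (End T)ᵐᵒᵖ) :=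
  {M | ∃ X : 𝒯, Nonempty (M ≅ homMod 𝒯 T X)}

/-- A Serre functor: an autoequivalence `S` with binatural isomorphisms
`𝒯(Y, SX) ≅ D 𝒯(X,Y)`. -/
structure SerreData [CategoryTheory.Linear k 𝒯] where
  S : 𝒯 ⥤ 𝒯
  equiv : S.IsEquivalence
  ε : ∀ X Y : 𝒯, (Y ⟶ S.obj X) ≃ₗ[k] Module.Dual k (X ⟶ Y)
  nat_left : ∀ {X Y Y' : 𝒯} (g : Y ⟶ Y') (h : Y' ⟶ S.obj X) (f : X ⟶ Y),
    ε X Y (g ≫ h) f = ε X Y' h (f ≫ g)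
  nat_right : ∀ {X X' Y : 𝒯} (u : X ⟶ X') (h : Y ⟶ S.obj X) (f : X' ⟶ Y),
    ε X' Y (h ≫ S.map u) f = ε X Y h (u ≫ f)

/-- A candidate `(d+2)`-angle `X₀ → X₁ → ⋯ → X_{d+1} → Σᵈ X₀`. -/
structure Candidate (Sd : 𝒯 ⥤ 𝒯) (d : ℕ) where
  obj : ℕ → 𝒯
  hom : ∀ n, obj n ⟶ obj (n + 1)
  conn : obj (d + 1) ⟶ Sd.obj (obj 0)

/-- A `(d+2)`-angulated structure on `𝒯`: an auto-equivalence `Σᵈ` together with a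
class of `(d+2)`-angles satisfying (part of) the Geiss–Keller–Oppermann axioms. -/
structure Angulation (d : ℕ) where
  shift : 𝒯 ⥤ 𝒯
  equiv : shift.IsEquivalence
  IsAngle : Candidate 𝒯 shift d → Prop
  comp_zero : ∀ C, IsAngle C → ∀ n, n + 1 ≤ d → C.hom n ≫ C.hom (n + 1) = 0
  conn_zero : ∀ C, IsAngle C → C.hom d ≫ C.conn = 0
  exists_angle : ∀ {A B : 𝒯} (f : A ⟶ B), ∃ C, IsAngle C ∧
    ∃ (eA : C.obj 0 ≅ A) (eB : C.obj 1 ≅ B), C.hom 0 = eA.hom ≫ f ≫ eB.inv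
  hom_exact : ∀ C, IsAngle C → ∀ (W : 𝒯) (n : ℕ), n + 1 ≤ d →
    Function.Exact (fun a : W ⟶ C.obj n => a ≫ C.hom n)
      (fun a : W ⟶ C.obj (n + 1) => a ≫ C.hom (n + 1))
  hom_exact_last : ∀ C, IsAngle C → ∀ W : 𝒯,
    Function.Exact (fun a : W ⟶ C.obj d => a ≫ C.hom d)
      (fun a : W ⟶ C.obj (d + 1) => a ≫ C.conn)

/-- Condition (b) of the paper. -/
def CondB [HasFiniteBiproducts 𝒯] {d : ℕ} (A : Angulation 𝒯 d) (T : 𝒯) : Prop :=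
  ∀ X : 𝒯, Indecomposable' 𝒯 X → (∃ a : T ⟶ X, a ≠ 0) →
    ∃ C, A.IsAngle C ∧ (∀ i, i ≤ d → InAdd 𝒯 T (C.obj i)) ∧
      Nonempty (C.obj (d + 1) ≅ X) ∧ ∀ a : T ⟶ C.obj (d + 1), a ≫ C.conn = 0

/-- For `T' ∈ add T` and any `X`, the map
`𝒯(X, ST') → Hom_Γ(𝒯(T,X), 𝒯(T,ST'))`, `f ↦ (a ↦ a ≫ f)`, is bijective. -/
theorem hom_into_serre_add_bijective
    (k 𝒯 : Type) [Field k] [Category.{0} 𝒯] [Preadditive 𝒯] [CategoryTheory.Linear k 𝒯]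
    [HasFiniteBiproducts 𝒯]
    (hfin : HomFinite k 𝒯) (SD : SerreData k 𝒯) (T T' X : 𝒯) (hT' : InAdd 𝒯 T T') :
    Function.Bijective (fun f : X ⟶ SD.S.obj T' => postcompHom 𝒯 T f) := by
  obtain ⟨n, s, r, hsr⟩ := hT'
  set ι : Fin n → (T ⟶ ⨁ fun _ : Fin n => T) := fun i => biproduct.ι (fun _ : Fin n => T) i with hι
  set π : Fin n → ((⨁ fun _ : Fin n => T) ⟶ T) := fun i => biproduct.π (fun _ : Fin n => T) i with hπ
  -- total identity
  have total : ∀ {Z : 𝒯} (b : T' ⟶ Z),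
      (∑ i : Fin n, (s ≫ π i) ≫ ι i ≫ r ≫ b) = b := by
    intro Z b
    have : (∑ i : Fin n, (s ≫ π i) ≫ ι i ≫ r ≫ b)
        = s ≫ (∑ i : Fin n, π i ≫ ι i) ≫ (r ≫ b) := by
      rw [Preadditive.sum_comp, Preadditive.comp_sum]
      exact Finset.sum_congr rfl fun i _ => by simp
    rw [this, hι, hπ, biproduct.total, Category.id_comp, ← Category.assoc, hsr,
      Category.id_comp]
  -- key formula for ε
  have key : ∀ (f : X ⟶ SD.S.obj T') (b : T' ⟶ X),
      SD.ε T' X f b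
        = ∑ i : Fin n, SD.ε T' T ((ι i ≫ r ≫ b) ≫ f) (s ≫ π i) := by
    intro f b
    have h1 : ∀ i : Fin n, SD.ε T' T ((ι i ≫ r ≫ b) ≫ f) (s ≫ π i)
        = SD.ε T' X f ((s ≫ π i) ≫ (ι i ≫ r ≫ b)) := fun i => SD.nat_left _ _ _
    rw [Finset.sum_congr rfl fun i _ => h1 i, ← map_sum (SD.ε T' X f), total b]
  -- Γ-linear maps are k-linear
  have hk : ∀ (φ : (T ⟶ X) →ₗ[(End T)ᵐᵒᵖ] (T ⟶ SD.S.obj T')) (c : k) (a : T ⟶ X),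
      φ (c • a) = c • φ a := by
    intro φ c a
    have h1 : c • a = (MulOpposite.op (show End T from c • 𝟙 T)) • a := by
      show c • a = (c • (𝟙 T : T ⟶ T)) ≫ a
      rw [Linear.smul_comp, Category.id_comp]
    have h2 : (MulOpposite.op (show End T from c • 𝟙 T)) • φ a = c • φ a := by
      show (c • (𝟙 T : T ⟶ T)) ≫ φ a = c • φ a
      rw [Linear.smul_comp, Category.id_comp]
    rw [h1, φ.map_smul, h2]
  constructor
  · -- injectivity
    intro f f' hff'
    have h : ∀ a : T ⟶ X, a ≫ f = a ≫ f' := fun a => DFunLike.congr_fun hff' a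
    apply (SD.ε T' X).injective
    apply LinearMap.ext
    intro b
    rw [key f b, key f' b]
    exact Finset.sum_congr rfl fun i _ => by rw [h (ι i ≫ r ≫ b)]
  · -- surjectivity
    intro φ
    let η : Module.Dual k (T' ⟶ X) :=
      { toFun := fun b => ∑ i : Fin n, SD.ε T' T (φ (ι i ≫ r ≫ b)) (s ≫ π i)
        map_add' := by
          intro b b'
          rw [← Finset.sum_add_distrib]
          refine Finset.sum_congr rfl fun i _ => ?_
          have h : ι i ≫ r ≫ (b + b') = (ι i ≫ r ≫ b) + (ι i ≫ r ≫ b') := by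
            simp
          rw [h, φ.map_add, (SD.ε T' T).map_add]
          rfl
        map_smul' := by
          intro c b
          simp only [RingHom.id_apply]
          rw [Finset.smul_sum]
          refine Finset.sum_congr rfl fun i _ => ?_
          have h : ι i ≫ r ≫ (c • b) = c • (ι i ≫ r ≫ b) := by
            rw [Linear.comp_smul, Linear.comp_smul]
          rw [h, hk φ c, (SD.ε T' T).map_smul]
          rfl }
    refine ⟨(SD.ε T' X).symm η, ?_⟩
    apply LinearMap.ext
    intro a
    show a ≫ (SD.ε T' X).symm η = φ a
    apply (SD.ε T' T).injective
    apply LinearMap.ext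
    intro u
    have h1 : SD.ε T' T (a ≫ (SD.ε T' X).symm η) u
        = SD.ε T' X ((SD.ε T' X).symm η) (u ≫ a) := SD.nat_left _ _ _
    rw [h1, (SD.ε T' X).apply_symm_apply]
    show (∑ i : Fin n, SD.ε T' T (φ (ι i ≫ r ≫ u ≫ a)) (s ≫ π i))
      = SD.ε T' T (φ a) u
    have h2 : ∀ i : Fin n,
        SD.ε T' T (φ (ι i ≫ r ≫ u ≫ a)) (s ≫ π i)
          = SD.ε T' T (φ a) ((s ≫ π i) ≫ ι i ≫ r ≫ u) := by
      intro i
      have ha : ι i ≫ r ≫ u ≫ a = (MulOpposite.op (show End T from ι i ≫ r ≫ u)) • a := by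
        show _ = (ι i ≫ r ≫ u) ≫ a
        simp
      rw [ha, φ.map_smul]
      have hb : (MulOpposite.op (show End T from ι i ≫ r ≫ u)) • φ a
          = (ι i ≫ r ≫ u) ≫ φ a := rfl
      rw [hb]
      have := SD.nat_left (X := T') (ι i ≫ r ≫ u) (φ a) (s ≫ π i)
      rw [this]
    rw [Finset.sum_congr rfl fun i _ => h2 i, ← map_sum (SD.ε T' T (φ a)), total u]
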